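/- For n ≥ 4, the inner arc complex of a non-orientable crown with n boundary vertices is not a cone: no c-arc class is disjoint from every other c-arc class. -/
import Mathlib


open Finset

attribute [local instance] Classical.propDecidable

noncomputable section

universe u v

/-- A finite abstract simplicial complex: a finite collection of nonempty finite sets
closed under taking nonempty subsets. -/
def IsComplex {V : Type u} (X : Finset (Finset V)) : Prop :=
  (∀ s ∈ X, s.Nonempty) ∧ ∀ s ∈ X, ∀ t : Finset V, t ⊆ s → t.Nonempty → t ∈ X

/-- `s` is a maximal simplex (facet) of `X`. -/
def IsFacet {V : Type u} (X : Finset (Finset V)) (s : Finset V) : Prop :=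
  s ∈ X ∧ ∀ t ∈ X, s ⊆ t → t = s

/-- An elementary collapse: `σ` is a free face of `X` whose unique maximal coface is `τ`,
and `Y` results from removing all simplices containing `σ`. -/
def ElemCollapse {V : Type u} (X Y : Finset (Finset V)) : Prop :=
  ∃ σ τ : Finset V, σ ∈ X ∧ IsFacet X τ ∧ σ ⊂ τ ∧
    (∀ t ∈ X, σ ⊆ t → t ⊆ τ) ∧ Y = X.filter (fun s => ¬ σ ⊆ s)

/-- `X` simplicially collapses onto `Y`. -/
def Collapses {V : Type u} (X Y : Finset (Finset V)) : Prop :=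
  Relation.ReflTransGen ElemCollapse X Y

/-- `X` is collapsible: it collapses to a single vertex. -/
def Collapsible {V : Type u} (X : Finset (Finset V)) : Prop :=
  ∃ v : V, Collapses X {{v}}

/-- The vertex `v` is dominated by the vertex `w ≠ v`: every facet containing `v`
contains `w`. -/
def Dominated {V : Type u} (X : Finset (Finset V)) (v w : V) : Prop :=
  w ≠ v ∧ ∀ s : Finset V, IsFacet X s → v ∈ s → w ∈ s

/-- An elementary strong collapse: deletion of a dominated vertex. -/
def ElemStrongCollapse {V : Type u} (X Y : Finset (Finset V)) : Prop :=
  ∃ v w : V, {v} ∈ X ∧ Dominated X v w ∧ Y = X.filter (fun s => v ∉ s)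

/-- `X` strongly collapses onto `Y`. -/
def StrongCollapses {V : Type u} (X Y : Finset (Finset V)) : Prop :=
  Relation.ReflTransGen ElemStrongCollapse X Y

/-- `X` is strongly collapsible: it strongly collapses to a single vertex. -/
def StrongCollapsible {V : Type u} (X : Finset (Finset V)) : Prop :=
  ∃ v : V, StrongCollapses X {{v}}

/-- The set of vertices of a complex. -/
def vertexSet {V : Type u} (X : Finset (Finset V)) : Finset V := X.sup id

/-- The link of a simplex `σ` in `X`. -/
def linkC {V : Type u} (X : Finset (Finset V)) (σ : Finset V) : Finset (Finset V) :=
  X.filter (fun η => Disjoint η σ ∧ η ∪ σ ∈ X)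

/-- The face-deletion of `σ` in `X`. -/
def faceDeletion {V : Type u} (X : Finset (Finset V)) (σ : Finset V) : Finset (Finset V) :=
  X.filter (fun η => ¬ σ ⊆ η)

/-- The simplicial join of two complexes (on disjoint vertex sets, via `Sum`). -/
def joinC {A : Type u} {B : Type v} (X : Finset (Finset A)) (Y : Finset (Finset B)) :
    Finset (Finset (A ⊕ B)) :=
  (((insert (∅ : Finset A) X) ×ˢ (insert (∅ : Finset B) Y)).image
      (fun p => p.1.image Sum.inl ∪ p.2.image Sum.inr)).filter (·.Nonempty)

/-- The flag (clique) complex on the admissible vertices (those satisfying `P`) of a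
finite type, with respect to a (reflexive, symmetric) compatibility relation `R`:
simplices are the nonempty finite sets of admissible vertices that are pairwise
compatible. -/
def cliqueComplex {A : Type u} [Fintype A] (P : A → Prop) (R : A → A → Prop) :
    Finset (Finset A) :=
  Finset.univ.filter (fun s : Finset A =>
    s.Nonempty ∧ (∀ a ∈ s, P a) ∧ ∀ a ∈ s, ∀ b ∈ s, R a b)

/-- A complex is a cone if some vertex lies in every maximal simplex. -/
def IsCone {A : Type u} (X : Finset (Finset A)) : Prop :=
  ∃ v : A, {v} ∈ X ∧ ∀ s, IsFacet X s → v ∈ s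

/-- Simplicial isomorphism (onto): `Y` is the image of `X` under an injection of
vertices. -/
def Isom {A : Type u} {B : Type v} (X : Finset (Finset A)) (Y : Finset (Finset B)) : Prop :=
  ∃ f : A → B, Function.Injective f ∧ Y = X.image (fun s => s.image f)

/-! ### A combinatorial model of the arc complex of a non-orientable crown `M(n)`
(a Möbius strip with `n` marked boundary vertices, labelled by `Fin n` in cyclic
order). -/

/-- `k` lies in the closed cyclic interval from `i` to `j` (counterclockwise); by
convention the interval is the full circle when `i = j`. -/
def btwn {n : ℕ} (i j k : Fin n) : Prop :=
  if i = j then True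
  else if i.val ≤ j.val then i.val ≤ k.val ∧ k.val ≤ j.val
  else i.val ≤ k.val ∨ k.val ≤ j.val

/-- `k` lies strictly inside the cyclic interval from `i` to `j`. -/
def sbtwn {n : ℕ} (i j k : Fin n) : Prop := btwn i j k ∧ k ≠ i ∧ k ≠ j

/-- Disjointness (compatibility) of two boundary arcs (b-arcs), each encoded by the
ordered pair `(i, j)` of its endpoints, the polygonal side being the cyclic interval
`[i..j]` (the pair `(i, i)` encodes the maximal b-arc `M i`, whose polygonal side is
the whole circle): the polygonal sides must be nested (with no endpoint of the outer
arc strictly inside the inner interval) or have disjoint interiors. -/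
def bbDisj {n : ℕ} (p q : Fin n × Fin n) : Prop :=
  p = q ∨
  ((∀ k, btwn p.1 p.2 k → btwn q.1 q.2 k) ∧ ¬ sbtwn p.1 p.2 q.1 ∧ ¬ sbtwn p.1 p.2 q.2) ∨
  ((∀ k, btwn q.1 q.2 k → btwn p.1 p.2 k) ∧ ¬ sbtwn q.1 q.2 p.1 ∧ ¬ sbtwn q.1 q.2 p.2) ∨
  ((∀ k, ¬ (sbtwn p.1 p.2 k ∧ btwn q.1 q.2 k)) ∧ ∀ k, ¬ (btwn p.1 p.2 k ∧ sbtwn q.1 q.2 k))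

/-- Disjointness of two c-arcs of the Möbius crown.  A c-arc is encoded by the pair
`(i, j)` of its endpoints with `i ≤ j` (so `(i, i)` is the maximal c-arc `L i`).
Cutting along the c-arc `(p₁, p₂)` produces a strip whose two sides carry the closed
intervals `[p₁..p₂]` and its closed complement; a c-arc `(q₁, q₂)` is disjoint from it
iff one of its endpoints lies in the first closed interval and the other in the
second. -/
def cDisjMob {n : ℕ} (p q : Fin n × Fin n) : Prop :=
  p = q ∨
  (p.1 ≤ q.1 ∧ q.1 ≤ p.2 ∧ (q.2 ≤ p.1 ∨ p.2 ≤ q.2)) ∨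
  (p.1 ≤ q.2 ∧ q.2 ≤ p.2 ∧ (q.1 ≤ p.1 ∨ p.2 ≤ q.1))

/-- Arcs of the non-orientable crown `M(n)`: `Sum.inl (i, j)` (with `i ≤ j`) is the
c-arc joining `i` and `j` (the maximal c-arc `L i` when `i = j`); `Sum.inr (i, j)` is
the b-arc with endpoints `i, j` whose polygonal side is the cyclic interval `[i..j]`
(the maximal b-arc `M i` when `i = j`). -/
abbrev MobArc (n : ℕ) := (Fin n × Fin n) ⊕ (Fin n × Fin n)

/-- Disjointness (compatibility, up to homotopy) of arcs of the non-orientable crown: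
a c-arc is disjoint from a b-arc iff neither of its endpoints lies strictly inside the
polygonal side of the b-arc. -/
def mobDisj {n : ℕ} : MobArc n → MobArc n → Prop
  | Sum.inl p, Sum.inl q => cDisjMob p q
  | Sum.inl p, Sum.inr q => ¬ sbtwn q.1 q.2 p.1 ∧ ¬ sbtwn q.1 q.2 p.2
  | Sum.inr q, Sum.inl p => ¬ sbtwn q.1 q.2 p.1 ∧ ¬ sbtwn q.1 q.2 p.2
  | Sum.inr p, Sum.inr q => bbDisj p q

/-- Validity: c-arcs are encoded with `i ≤ j`; the maximal b-arcs `M i` are nontrivial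
only when `n ≥ 2`. -/
def mobValid {n : ℕ} : MobArc n → Prop
  | Sum.inl p => p.1 ≤ p.2
  | Sum.inr p => p.1 ≠ p.2 ∨ 2 ≤ n

/-- The full arc complex of the non-orientable crown `M(n)`. -/
def mobComplex (n : ℕ) : Finset (Finset (MobArc n)) :=
  cliqueComplex mobValid mobDisj

/-- The inner arc complex of `M(n)`, the subcomplex spanned by the c-arcs. -/
def innerMobComplex (n : ℕ) : Finset (Finset (MobArc n)) :=
  (mobComplex n).filter (fun s => ∀ a ∈ s, a.isLeft = true)

/-- The inner arc complex of `M(n)`, directly as a flag complex on c-arcs. -/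
def innerMob (n : ℕ) : Finset (Finset (Fin n × Fin n)) :=
  cliqueComplex (fun p => p.1 ≤ p.2) cDisjMob

lemma exists_facet_containing {V : Type u} (X : Finset (Finset V)) (s : Finset V)
    (hs : s ∈ X) : ∃ t, IsFacet X t ∧ s ⊆ t := by
  classical
  obtain ⟨t, ht, hmax⟩ := Finset.exists_max_image (X.filter (fun t => s ⊆ t))
    (fun t => t.card) ⟨s, by simp [hs]⟩
  rw [Finset.mem_filter] at ht
  refine ⟨t, ⟨ht.1, fun u hu htu => ?_⟩, ht.2⟩
  exact (Finset.eq_of_subset_of_card_le htu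
    (hmax u (Finset.mem_filter.mpr ⟨hu, ht.2.trans htu⟩))).symm

lemma key {n : ℕ} (hn : 4 ≤ n) (p : Fin n × Fin n) (hp : p.1 ≤ p.2) :
    ∃ q : Fin n × Fin n, q.1 ≤ q.2 ∧ ¬ cDisjMob p q := by
  have hcard : ({p.1, p.2} : Finset (Fin n)).card < (Finset.univ : Finset (Fin n)).card := by
    calc ({p.1, p.2} : Finset (Fin n)).card ≤ 2 := Finset.card_insert_le _ _ |>.trans (by simp)
    _ < n := by omega
    _ = Finset.univ.card := (Finset.card_fin n).symm
  have hss : ({p.1, p.2} : Finset (Fin n)) ⊂ Finset.univ :=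
    Finset.ssubset_univ_iff.mpr (fun h => by rw [h] at hcard; omega)
  obtain ⟨e, -, he⟩ := Finset.exists_of_ssubset hss
  simp only [Finset.mem_insert, Finset.mem_singleton, not_or] at he
  obtain ⟨he1, he2⟩ := he
  refine ⟨(e, e), le_refl e, ?_⟩
  intro h
  rcases h with h | h | h
  · exact he1 (by simpa using congrArg Prod.fst h.symm)
  · obtain ⟨h1, h2, h3 | h3⟩ := h
    · exact he1 (le_antisymm h3 h1)
    · exact he2 (le_antisymm h2 h3)
  · obtain ⟨h1, h2, h3 | h3⟩ := h
    · exact he1 (le_antisymm h3 h1)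
    · exact he2 (le_antisymm h2 h3)

/-- For `n ≥ 4`, the inner arc complex of the non-orientable crown
`M(n)` is not a cone: no c-arc class is disjoint from every other c-arc class. -/
theorem stmt13 (n : ℕ) (hn : 4 ≤ n) :
    ¬ IsCone (innerMob n) ∧
    ¬ ∃ p : Fin n × Fin n, p.1 ≤ p.2 ∧
        ∀ q : Fin n × Fin n, q.1 ≤ q.2 → cDisjMob p q := by
  have main : ¬ ∃ p : Fin n × Fin n, p.1 ≤ p.2 ∧
      ∀ q : Fin n × Fin n, q.1 ≤ q.2 → cDisjMob p q := by
    rintro ⟨p, hp, hall⟩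
    obtain ⟨q, hq, hbad⟩ := key hn p hp
    exact hbad (hall q hq)
  refine ⟨?_, main⟩
  rintro ⟨v, hv1, hv2⟩
  have hvmem : v ∈ ({v} : Finset (Fin n × Fin n)) := Finset.mem_singleton_self v
  have hvX := hv1
  simp only [innerMob, cliqueComplex, Finset.mem_filter] at hvX
  obtain ⟨-, -, hvalid, -⟩ := hvX
  have hpv : v.1 ≤ v.2 := hvalid v hvmem
  obtain ⟨q, hq, hbad⟩ := key hn v hpv
  have hqmem : ({q} : Finset (Fin n × Fin n)) ∈ innerMob n := by
    simp only [innerMob, cliqueComplex, Finset.mem_filter]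
    refine ⟨Finset.mem_univ _, Finset.singleton_nonempty q, ?_, ?_⟩
    · intro a ha; rw [Finset.mem_singleton] at ha; subst ha; exact hq
    · intro a ha b hb
      rw [Finset.mem_singleton] at ha hb; subst ha; subst hb
      exact Or.inl rfl
  obtain ⟨t, hft, hqt⟩ := exists_facet_containing _ _ hqmem
  have hvt := hv2 t hft
  have htX := hft.1
  simp only [innerMob, cliqueComplex, Finset.mem_filter] at htX
  obtain ⟨-, -, -, hR⟩ := htX
  exact hbad (hR v hvt q (hqt (Finset.mem_singleton_self q)))
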